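/- Discrete EOT equals the supremum over λ in the simplex of Wasserstein costs with the min-cost: EOT_C(a,b) = sup_{λ∈Δ_N} W_{C_λ}(a,b) where (C_λ)_{kl} = min_i λ_i (C_i)_{kl}. -/

import Mathlib

open Finset

/-- Frobenius inner product of two matrices. -/
def dot {n m : ℕ} (P C : Matrix (Fin n) (Fin m) ℝ) : ℝ := ∑ i, ∑ j, P i j * C i j

/-- `P` is a coupling of the probability vectors `a` and `b`. -/
def IsCoupling {n m : ℕ} (a : Fin n → ℝ) (b : Fin m → ℝ)
    (P : Matrix (Fin n) (Fin m) ℝ) : Prop :=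
  (∀ i j, 0 ≤ P i j) ∧ (∀ i, ∑ j, P i j = a i) ∧ (∀ j, ∑ i, P i j = b j)

/-- Discrete optimal transport value. -/
noncomputable def W {n m : ℕ} (a : Fin n → ℝ) (b : Fin m → ℝ)
    (C : Matrix (Fin n) (Fin m) ℝ) : ℝ :=
  sInf {t | ∃ P, IsCoupling a b P ∧ t = dot P C}

/-- The constraint set `Γ^N_{a,b}` of coupling decompositions. -/
def Gamma (N : ℕ) {n m : ℕ} (a : Fin n → ℝ) (b : Fin m → ℝ) :
    Set (Fin N → Matrix (Fin n) (Fin m) ℝ) :=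
  {P | (∀ k i j, 0 ≤ P k i j) ∧ (∀ i, ∑ k, ∑ j, P k i j = a i) ∧
       (∀ j, ∑ k, ∑ i, P k i j = b j)}

/-- Discrete equitable optimal transport value. -/
noncomputable def EOT {N n m : ℕ} (a : Fin n → ℝ) (b : Fin m → ℝ)
    (C : Fin N → Matrix (Fin n) (Fin m) ℝ) : ℝ :=
  sInf {t | ∃ P ∈ Gamma N a b, t = ⨆ i, dot (P i) (C i)}

section Aux
variable {N n m : ℕ} {a : Fin n → ℝ} {b : Fin m → ℝ}

lemma neg_abs_le_mul' {p c : ℝ} (h0 : 0 ≤ p) (h1 : p ≤ 1) : -|c| ≤ p * c := by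
  rcases abs_cases c with ⟨h, hc⟩ | ⟨h, hc⟩ <;> nlinarith

lemma coupling_le_one (ha : a ∈ stdSimplex ℝ (Fin n)) {P} (hP : IsCoupling a b P)
    (i : Fin n) (j : Fin m) : P i j ≤ 1 := by
  have h1 : P i j ≤ ∑ j', P i j' :=
    Finset.single_le_sum (fun j' _ => hP.1 i j') (Finset.mem_univ j)
  have h2 : a i ≤ ∑ i', a i' :=
    Finset.single_le_sum (fun i' _ => ha.1 i') (Finset.mem_univ i)
  rw [hP.2.1 i] at h1; rw [ha.2] at h2; linarith

lemma dot_lb {P C : Matrix (Fin n) (Fin m) ℝ} (h0 : ∀ i j, 0 ≤ P i j)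
    (h1 : ∀ i j, P i j ≤ 1) : -(∑ i, ∑ j, |C i j|) ≤ dot P C := by
  unfold dot
  have : ∑ i, ∑ j, -|C i j| ≤ ∑ i, ∑ j, P i j * C i j :=
    Finset.sum_le_sum fun i _ => Finset.sum_le_sum fun j _ =>
      neg_abs_le_mul' (h0 i j) (h1 i j)
  simpa using this

lemma W_bddBelow (ha : a ∈ stdSimplex ℝ (Fin n)) (C : Matrix (Fin n) (Fin m) ℝ) :
    BddBelow {t | ∃ P, IsCoupling a b P ∧ t = dot P C} :=
  ⟨-(∑ i, ∑ j, |C i j|), by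
    rintro t ⟨P, hP, rfl⟩
    exact dot_lb hP.1 (coupling_le_one ha hP)⟩

lemma isCoupling_prod (ha : a ∈ stdSimplex ℝ (Fin n)) (hb : b ∈ stdSimplex ℝ (Fin m)) :
    IsCoupling a b (fun i j => a i * b j) := by
  refine ⟨fun i j => mul_nonneg (ha.1 i) (hb.1 j), fun i => ?_, fun j => ?_⟩
  · rw [← Finset.mul_sum, hb.2, mul_one]
  · rw [← Finset.sum_mul, ha.2, one_mul]

lemma W_le_dot (ha : a ∈ stdSimplex ℝ (Fin n)) {Q C : Matrix (Fin n) (Fin m) ℝ}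
    (hQ : IsCoupling a b Q) : W a b C ≤ dot Q C :=
  csInf_le (W_bddBelow ha C) ⟨Q, hQ, rfl⟩

lemma le_W (ha : a ∈ stdSimplex ℝ (Fin n)) (hb : b ∈ stdSimplex ℝ (Fin m))
    {C : Matrix (Fin n) (Fin m) ℝ} {r : ℝ}
    (h : ∀ Q, IsCoupling a b Q → r ≤ dot Q C) : r ≤ W a b C :=
  le_csInf ⟨_, ⟨_, isCoupling_prod ha hb, rfl⟩⟩ (by rintro t ⟨Q, hQ, rfl⟩; exact h Q hQ)

lemma gamma_le_one (ha : a ∈ stdSimplex ℝ (Fin n))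
    {P : Fin N → Matrix (Fin n) (Fin m) ℝ} (hP : P ∈ Gamma N a b)
    (k : Fin N) (i : Fin n) (j : Fin m) : P k i j ≤ 1 := by
  have h1 : P k i j ≤ ∑ j', P k i j' :=
    Finset.single_le_sum (fun j' _ => hP.1 k i j') (Finset.mem_univ j)
  have h2 : ∑ j', P k i j' ≤ ∑ k', ∑ j', P k' i j' :=
    Finset.single_le_sum (fun k' _ => Finset.sum_nonneg fun j' _ => hP.1 k' i j')
      (Finset.mem_univ k)
  have h3 : a i ≤ ∑ i', a i' :=
    Finset.single_le_sum (fun i' _ => ha.1 i') (Finset.mem_univ i)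
  rw [hP.2.1 i] at h2; rw [ha.2] at h3; linarith

lemma gamma_sum_coupling {P : Fin N → Matrix (Fin n) (Fin m) ℝ} (hP : P ∈ Gamma N a b) :
    IsCoupling a b (fun i j => ∑ k, P k i j) := by
  refine ⟨fun i j => Finset.sum_nonneg fun k _ => hP.1 k i j, fun i => ?_, fun j => ?_⟩
  · rw [Finset.sum_comm]; exact hP.2.1 i
  · rw [Finset.sum_comm]; exact hP.2.2 j

end Aux

section Key
variable {N n m : ℕ} {a : Fin n → ℝ} {b : Fin m → ℝ}

lemma triple_swap (f : Fin N → Fin n → Fin m → ℝ) :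
    ∑ i, ∑ j, ∑ k, f k i j = ∑ k, ∑ i, ∑ j, f k i j := by
  calc ∑ i, ∑ j, ∑ k, f k i j
      = ∑ i, ∑ k, ∑ j, f k i j :=
        Finset.sum_congr rfl fun i _ => by rw [Finset.sum_comm]
    _ = ∑ k, ∑ i, ∑ j, f k i j := by rw [Finset.sum_comm]

lemma weighted_dot (l : Fin N → ℝ) (C P : Fin N → Matrix (Fin n) (Fin m) ℝ) :
    ∑ k, l k * dot (P k) (C k) = ∑ i, ∑ j, ∑ k, P k i j * (l k * C k i j) := by
  rw [triple_swap]
  refine Finset.sum_congr rfl fun k _ => ?_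
  unfold dot
  rw [Finset.mul_sum]
  refine Finset.sum_congr rfl fun i _ => ?_
  rw [Finset.mul_sum]
  exact Finset.sum_congr rfl fun j _ => by ring

/-- easy inequality: W with min-cost ≤ weighted sum for any P ∈ Γ. -/
lemma key1 [Nonempty (Fin N)] (ha : a ∈ stdSimplex ℝ (Fin n)) {l : Fin N → ℝ}
    (C : Fin N → Matrix (Fin n) (Fin m) ℝ)
    {P : Fin N → Matrix (Fin n) (Fin m) ℝ} (hP : P ∈ Gamma N a b) :
    W a b (fun i j => ⨅ k, l k * C k i j) ≤ ∑ k, l k * dot (P k) (C k) := by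
  have hQ := gamma_sum_coupling hP
  refine le_trans (W_le_dot ha hQ) ?_
  rw [weighted_dot]
  unfold dot
  refine Finset.sum_le_sum fun i _ => Finset.sum_le_sum fun j _ => ?_
  rw [Finset.sum_mul]
  refine Finset.sum_le_sum fun k _ => ?_
  exact mul_le_mul_of_nonneg_left (ciInf_le (Finite.bddBelow_range _) k) (hP.1 k i j)

/-- splitting a coupling along the argmin gives equality. -/
lemma key2 [Nonempty (Fin N)] {l : Fin N → ℝ}
    (C : Fin N → Matrix (Fin n) (Fin m) ℝ)
    {Q : Matrix (Fin n) (Fin m) ℝ} (hQ : IsCoupling a b Q) :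
    ∃ P ∈ Gamma N a b,
      dot Q (fun i j => ⨅ k, l k * C k i j) = ∑ k, l k * dot (P k) (C k) := by
  have hmin : ∀ i j, ∃ k0 : Fin N, ∀ k, l k0 * C k0 i j ≤ l k * C k i j := fun i j =>
    Finite.exists_min _
  choose k0 hk0 using hmin
  have hinf : ∀ i j, (⨅ k, l k * C k i j) = l (k0 i j) * C (k0 i j) i j := fun i j =>
    le_antisymm (ciInf_le (Finite.bddBelow_range _) _) (le_ciInf (hk0 i j))
  set P : Fin N → Matrix (Fin n) (Fin m) ℝ :=
    fun k i j => if k = k0 i j then Q i j else 0 with hPdef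
  have hPmem : P ∈ Gamma N a b := by
    refine ⟨fun k i j => ?_, fun i => ?_, fun j => ?_⟩
    · show (0:ℝ) ≤ if k = k0 i j then Q i j else 0
      split
      · exact hQ.1 i j
      · exact le_rfl
    · rw [Finset.sum_comm]
      calc ∑ j, ∑ k, P k i j = ∑ j, Q i j := by
            refine Finset.sum_congr rfl fun j _ => ?_
            simp [hPdef, Finset.sum_ite_eq']
        _ = a i := hQ.2.1 i
    · rw [Finset.sum_comm]
      calc ∑ i, ∑ k, P k i j = ∑ i, Q i j := by
            refine Finset.sum_congr rfl fun i _ => ?_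
            simp [hPdef, Finset.sum_ite_eq']
        _ = b j := hQ.2.2 j
  refine ⟨P, hPmem, ?_⟩
  rw [weighted_dot]
  unfold dot
  refine Finset.sum_congr rfl fun i _ => Finset.sum_congr rfl fun j _ => ?_
  beta_reduce
  rw [hinf i j]
  have : ∀ k : Fin N, P k i j * (l k * C k i j)
      = if k = k0 i j then Q i j * (l (k0 i j) * C (k0 i j) i j) else 0 := by
    intro k
    show (if k = k0 i j then Q i j else 0) * (l k * C k i j) = _
    split
    · rename_i h; subst h; ring
    · ring
  simp_rw [this]
  simp [Finset.sum_ite_eq']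

end Key

section Topo
variable {N n m : ℕ} {a : Fin n → ℝ} {b : Fin m → ℝ}

lemma gamma_uniform (hN : 0 < N) (ha : a ∈ stdSimplex ℝ (Fin n))
    (hb : b ∈ stdSimplex ℝ (Fin m)) :
    (fun (_ : Fin N) (i : Fin n) (j : Fin m) => a i * b j / N) ∈ Gamma N a b := by
  have hN' : (N : ℝ) ≠ 0 := Nat.cast_ne_zero.2 hN.ne'
  refine ⟨fun k i j => div_nonneg (mul_nonneg (ha.1 i) (hb.1 j)) (Nat.cast_nonneg N),
    fun i => ?_, fun j => ?_⟩
  · beta_reduce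
    have : ∀ k : Fin N, k ∈ Finset.univ → ∑ j, a i * b j / N = a i / N := by
      intro k _
      rw [← Finset.sum_div, ← Finset.mul_sum, hb.2, mul_one]
    rw [Finset.sum_congr rfl this]
    rw [Finset.sum_const, Finset.card_univ, Fintype.card_fin, nsmul_eq_mul]
    field_simp
  · beta_reduce
    have : ∀ k : Fin N, k ∈ Finset.univ → ∑ i, a i * b j / N = b j / N := by
      intro k _
      rw [← Finset.sum_div, ← Finset.sum_mul, ha.2, one_mul]
    rw [Finset.sum_congr rfl this]
    rw [Finset.sum_const, Finset.card_univ, Fintype.card_fin, nsmul_eq_mul]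
    field_simp

lemma EOT_nonempty (hN : 0 < N) (ha : a ∈ stdSimplex ℝ (Fin n))
    (hb : b ∈ stdSimplex ℝ (Fin m)) (C : Fin N → Matrix (Fin n) (Fin m) ℝ) :
    {t | ∃ P ∈ Gamma N a b, t = ⨆ i, dot (P i) (C i)}.Nonempty :=
  ⟨_, _, gamma_uniform hN ha hb, rfl⟩

lemma EOT_bddBelow (hN : 0 < N) (ha : a ∈ stdSimplex ℝ (Fin n))
    (C : Fin N → Matrix (Fin n) (Fin m) ℝ) :
    BddBelow {t | ∃ P ∈ Gamma N a b, t = ⨆ i, dot (P i) (C i)} := by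
  haveI : Nonempty (Fin N) := ⟨⟨0, hN⟩⟩
  refine ⟨-(∑ k, ∑ i, ∑ j, |C k i j|), ?_⟩
  rintro t ⟨P, hP, rfl⟩
  set k0 : Fin N := Classical.arbitrary (Fin N)
  have h1 : -(∑ i, ∑ j, |C k0 i j|) ≤ dot (P k0) (C k0) :=
    dot_lb (hP.1 k0) (gamma_le_one ha hP k0)
  have h2 : dot (P k0) (C k0) ≤ ⨆ k, dot (P k) (C k) :=
    le_ciSup (f := fun k => dot (P k) (C k)) (Finite.bddAbove_range _) k0
  have h3 : ∑ i, ∑ j, |C k0 i j| ≤ ∑ k, ∑ i, ∑ j, |C k i j| :=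
    Finset.single_le_sum (f := fun k => ∑ i, ∑ j, |C k i j|)
      (fun k _ => Finset.sum_nonneg fun i _ => Finset.sum_nonneg fun j _ => abs_nonneg _)
      (Finset.mem_univ k0)
  linarith

lemma EOT_le (hN : 0 < N) (ha : a ∈ stdSimplex ℝ (Fin n))
    (C : Fin N → Matrix (Fin n) (Fin m) ℝ)
    {P : Fin N → Matrix (Fin n) (Fin m) ℝ} (hP : P ∈ Gamma N a b) :
    EOT a b C ≤ ⨆ k, dot (P k) (C k) :=
  csInf_le (EOT_bddBelow hN ha C) ⟨P, hP, rfl⟩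

/-- The evaluation map `P ↦ (dot (P k) (C k))_k` as a linear map. -/
noncomputable def Gmap (C : Fin N → Matrix (Fin n) (Fin m) ℝ) :
    (Fin N → Matrix (Fin n) (Fin m) ℝ) →ₗ[ℝ] (Fin N → ℝ) where
  toFun P := fun k => dot (P k) (C k)
  map_add' P Q := by
    funext k
    simp [dot, add_mul, Finset.sum_add_distrib]
  map_smul' c P := by
    funext k
    simp [dot, Finset.mul_sum, smul_eq_mul, mul_assoc]

lemma continuous_entry (k : Fin N) (i : Fin n) (j : Fin m) :
    Continuous fun (P : Fin N → Matrix (Fin n) (Fin m) ℝ) => P k i j :=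
  ((continuous_apply k).matrix_elem i j)

lemma gamma_isCompact (ha : a ∈ stdSimplex ℝ (Fin n)) :
    IsCompact (Gamma N a b) := by
  have hK : IsCompact {P : Fin N → Matrix (Fin n) (Fin m) ℝ |
      ∀ k i j, P k i j ∈ Set.Icc (0:ℝ) 1} := by
    have heq : {P : Fin N → Matrix (Fin n) (Fin m) ℝ | ∀ k i j, P k i j ∈ Set.Icc (0:ℝ) 1}
        = Set.univ.pi (fun _ : Fin N => Set.univ.pi
            (fun _ : Fin n => Set.univ.pi fun _ : Fin m => Set.Icc (0:ℝ) 1)) := by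
      ext P
      constructor
      · intro h k _ i _ j _
        exact h k i j
      · intro h k i j
        exact h k (Set.mem_univ k) i (Set.mem_univ i) j (Set.mem_univ j)
    rw [heq]
    exact isCompact_univ_pi fun k => isCompact_univ_pi fun i =>
      isCompact_univ_pi fun j => isCompact_Icc
  have hclosed : IsClosed (Gamma N a b) := by
    have h1 : Gamma N a b =
        (⋂ k, ⋂ i, ⋂ j, {P : Fin N → Matrix (Fin n) (Fin m) ℝ | 0 ≤ P k i j}) ∩
        ((⋂ i, {P : Fin N → Matrix (Fin n) (Fin m) ℝ | ∑ k, ∑ j, P k i j = a i}) ∩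
         (⋂ j, {P : Fin N → Matrix (Fin n) (Fin m) ℝ | ∑ k, ∑ i, P k i j = b j})) := by
      ext P
      simp only [Gamma, Set.mem_setOf_eq, Set.mem_inter_iff, Set.mem_iInter]
      try tauto
    rw [h1]
    refine IsClosed.inter ?_ (IsClosed.inter ?_ ?_)
    · exact isClosed_iInter fun k => isClosed_iInter fun i => isClosed_iInter fun j =>
        isClosed_le continuous_const (continuous_entry k i j)
    · exact isClosed_iInter fun i => isClosed_eq
        (continuous_finset_sum _ fun k _ => continuous_finset_sum _ fun j _ =>
          continuous_entry k i j) continuous_const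
    · exact isClosed_iInter fun j => isClosed_eq
        (continuous_finset_sum _ fun k _ => continuous_finset_sum _ fun i _ =>
          continuous_entry k i j) continuous_const
  refine hK.of_isClosed_subset hclosed ?_
  intro P hP k i j
  exact ⟨hP.1 k i j, gamma_le_one ha hP k i j⟩

lemma gamma_convex : Convex ℝ (Gamma N a b) := by
  intro P hP Q hQ α β hα hβ hab
  refine ⟨fun k i j => ?_, fun i => ?_, fun j => ?_⟩
  · have : (α • P + β • Q) k i j = α * P k i j + β * Q k i j := rfl
    rw [this]
    exact add_nonneg (mul_nonneg hα (hP.1 k i j)) (mul_nonneg hβ (hQ.1 k i j))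
  · have : ∀ k i j, (α • P + β • Q) k i j = α * P k i j + β * Q k i j := fun _ _ _ => rfl
    simp_rw [this, Finset.sum_add_distrib, ← Finset.mul_sum, hP.2.1 i, hQ.2.1 i]
    try linear_combination (a i) * hab
  · have : ∀ k i j, (α • P + β • Q) k i j = α * P k i j + β * Q k i j := fun _ _ _ => rfl
    simp_rw [this, Finset.sum_add_distrib, ← Finset.mul_sum, hP.2.2 j, hQ.2.2 j]
    try linear_combination (b j) * hab

end Topo

open Pointwise

lemma lin_repr {N : ℕ} (f : (Fin N → ℝ) →L[ℝ] ℝ) (y : Fin N → ℝ) :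
    f y = ∑ k, y k * f (Pi.single k 1) := by
  have hy : y = ∑ k, y k • (Pi.single k (1:ℝ) : Fin N → ℝ) := by
    funext k'
    simp [Finset.sum_apply, Pi.single_apply]
  conv_lhs => rw [hy]
  rw [map_sum]
  simp [smul_eq_mul]


/-- `EOT_C(a,b) = sup_{λ∈Δ_N} W_{C_λ}(a,b)` with `(C_λ)_{kl} = min_i λᵢ(C_i)_{kl}`. -/
theorem stmt_9 (N n m : ℕ) (hN : 0 < N) (a : Fin n → ℝ) (b : Fin m → ℝ)
    (ha : a ∈ stdSimplex ℝ (Fin n)) (hb : b ∈ stdSimplex ℝ (Fin m))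
    (C : Fin N → Matrix (Fin n) (Fin m) ℝ) :
    EOT a b C =
      sSup {t | ∃ l ∈ stdSimplex ℝ (Fin N),
        t = W a b (fun k j => ⨅ i, l i * C i k j)} := by
  haveI : Nonempty (Fin N) := ⟨⟨0, hN⟩⟩
  have hNne : (N : ℝ) ≠ 0 := Nat.cast_ne_zero.2 hN.ne'
  set Ssup := {t | ∃ l ∈ stdSimplex ℝ (Fin N),
      t = W a b (fun k j => ⨅ i, l i * C i k j)} with hSsup
  have easy : ∀ t ∈ Ssup, t ≤ EOT a b C := by
    rintro t ⟨l, hl, rfl⟩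
    refine le_csInf (EOT_nonempty hN ha hb C) ?_
    rintro s ⟨P, hP, rfl⟩
    refine le_trans (key1 ha C hP) ?_
    calc ∑ k, l k * dot (P k) (C k)
        ≤ ∑ k, l k * ⨆ k', dot (P k') (C k') :=
          Finset.sum_le_sum fun k _ => mul_le_mul_of_nonneg_left
            (le_ciSup (f := fun k' => dot (P k') (C k'))
              (Finite.bddAbove_range _) k) (hl.1 k)
      _ = ⨆ k', dot (P k') (C k') := by rw [← Finset.sum_mul, hl.2, one_mul]
  have hSb : BddAbove Ssup := ⟨EOT a b C, fun t ht => easy t ht⟩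
  have hSne : Ssup.Nonempty := by
    refine ⟨_, (fun _ => (N:ℝ)⁻¹), ⟨fun k => by positivity, ?_⟩, rfl⟩
    rw [Finset.sum_const, Finset.card_univ, Fintype.card_fin, nsmul_eq_mul]
    field_simp
  refine le_antisymm ?_ (csSup_le hSne easy)
  refine le_of_forall_pos_le_add fun ε hε => ?_
  set v := EOT a b C with hv
  set T := (Gmap C) '' (Gamma N a b) with hT
  set O := {y : Fin N → ℝ | ∀ k, 0 ≤ y k} with hO
  set S := T + O with hS
  have hTcomp : IsCompact T :=
    (gamma_isCompact ha).image (Gmap C).continuous_of_finiteDimensional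
  have hOclosed : IsClosed O := by
    have hOe : O = ⋂ k, {y : Fin N → ℝ | 0 ≤ y k} := by
      ext y; simp [hO, Set.mem_iInter]
    rw [hOe]
    exact isClosed_iInter fun k => isClosed_le continuous_const (continuous_apply k)
  have hSclosed : IsClosed S := hOclosed.add_left_of_isCompact hTcomp
  have hOconv : Convex ℝ O := by
    intro y hy z hz α β hα hβ hab k
    have h : (α • y + β • z) k = α * y k + β * z k := rfl
    rw [h]
    exact add_nonneg (mul_nonneg hα (hy k)) (mul_nonneg hβ (hz k))
  have hSconv : Convex ℝ S := (gamma_convex.linear_image (Gmap C)).add hOconv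
  set x : Fin N → ℝ := fun _ => v - ε with hx
  have hxS : x ∉ S := by
    intro hxmem
    rw [hS, Set.mem_add] at hxmem
    obtain ⟨z, hz, w, hw, hzw⟩ := hxmem
    rw [hT] at hz
    obtain ⟨P, hP, rfl⟩ := hz
    have hub : ∀ k, dot (P k) (C k) ≤ v - ε := by
      intro k
      have h1 := congrFun hzw k
      have h2 : Gmap C P k = dot (P k) (C k) := rfl
      have h3 : x k = v - ε := rfl
      have h4 := hw k
      rw [Pi.add_apply, h2, h3] at h1
      linarith
    have hle : v ≤ v - ε := le_trans (EOT_le hN ha C hP) (ciSup_le hub)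
    linarith
  obtain ⟨f, u, hfx, hfS⟩ := geometric_hahn_banach_point_closed hSconv hSclosed hxS
  set c : Fin N → ℝ := fun k => f (Pi.single k 1) with hc
  have hrepr : ∀ y, f y = ∑ k, y k * c k := lin_repr f
  set P0 := fun (_ : Fin N) (i : Fin n) (j : Fin m) => a i * b j / N with hP0
  have hP0m : P0 ∈ Gamma N a b := gamma_uniform hN ha hb
  set y0 := Gmap C P0 with hy0
  have hy0T : y0 ∈ T := ⟨P0, hP0m, rfl⟩
  have haddS : ∀ w ∈ O, y0 + w ∈ S := fun w hw => Set.add_mem_add hy0T hw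
  have hy0S : y0 ∈ S := by
    have h := haddS 0 (fun k => le_rfl)
    simpa using h
  have hcnn : ∀ k, 0 ≤ c k := by
    intro k
    by_contra hneg
    push_neg at hneg
    have hcne : c k ≠ 0 := ne_of_lt hneg
    set t := (f y0 - u + 1) / (-(c k)) with ht
    have htpos : 0 < t :=
      div_pos (by linarith [hfS y0 hy0S]) (by linarith)
    have hmem : y0 + t • (Pi.single k (1:ℝ) : Fin N → ℝ) ∈ S := by
      refine haddS _ fun k' => ?_
      have h : (t • (Pi.single k (1:ℝ) : Fin N → ℝ)) k' = t * (Pi.single k (1:ℝ) : Fin N → ℝ) k' := rfl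
      rw [h, Pi.single_apply]
      split
      · simpa using htpos.le
      · simp
    have hlt := hfS _ hmem
    rw [map_add, map_smul, smul_eq_mul] at hlt
    have hck : f (Pi.single k 1) = c k := rfl
    rw [hck] at hlt
    have htck : t * c k = -(f y0 - u + 1) := by
      rw [ht]
      field_simp
    linarith
  have hscpos : 0 < ∑ k, c k := by
    rcases lt_or_eq_of_le (Finset.sum_nonneg fun k _ => hcnn k) with h | h
    · exact h
    · exfalso
      have hallz : ∀ k ∈ Finset.univ, c k = 0 :=
        (Finset.sum_eq_zero_iff_of_nonneg fun k _ => hcnn k).1 h.symm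
      have hf0 : ∀ y : Fin N → ℝ, f y = 0 := by
        intro y
        rw [hrepr]
        exact Finset.sum_eq_zero fun k _ => by rw [hallz k (Finset.mem_univ k), mul_zero]
      have h1 := hfx
      have h2 := hfS y0 hy0S
      rw [hf0 x] at h1
      rw [hf0 y0] at h2
      linarith
  set sc := ∑ k, c k with hsc
  set l : Fin N → ℝ := fun k => c k / sc with hldef
  have hlmem : l ∈ stdSimplex ℝ (Fin N) := by
    refine ⟨fun k => div_nonneg (hcnn k) hscpos.le, ?_⟩
    show ∑ k, c k / sc = 1
    rw [← Finset.sum_div, ← hsc, div_self hscpos.ne']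
  have hWl : v - ε ≤ W a b (fun k j => ⨅ i, l i * C i k j) := by
    refine le_W ha hb fun Q hQ => ?_
    obtain ⟨P, hP, hPQ⟩ := key2 (l := l) C hQ
    rw [hPQ]
    have hGPS : Gmap C P ∈ S := by
      have h0 : (0 : Fin N → ℝ) ∈ O := fun k => le_rfl
      have hTm : Gmap C P ∈ T := ⟨P, hP, rfl⟩
      have h := Set.add_mem_add hTm h0
      simpa using h
    have h1 : u < ∑ k, dot (P k) (C k) * c k := by
      have := hfS _ hGPS
      rw [hrepr] at this
      exact this
    have h2 : (v - ε) * sc < u := by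
      have := hfx
      rw [hrepr] at this
      have hx2 : ∑ k, x k * c k = (v - ε) * sc := by
        rw [hsc, Finset.mul_sum]
        try exact Finset.sum_congr rfl fun k _ => rfl
      rw [hx2] at this
      exact this
    have hkey : ∑ k, l k * dot (P k) (C k) = (∑ k, dot (P k) (C k) * c k) / sc := by
      rw [Finset.sum_div]
      refine Finset.sum_congr rfl fun k _ => ?_
      show c k / sc * dot (P k) (C k) = dot (P k) (C k) * c k / sc
      ring
    rw [hkey, le_div_iff₀ hscpos]
    linarith
  have hmem : W a b (fun k j => ⨅ i, l i * C i k j) ∈ Ssup := ⟨l, hlmem, rfl⟩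
  have := le_trans hWl (le_csSup hSb hmem)
  linarith
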